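/- A matrix A in SL(2,ℝ) belongs to a one-parameter subgroup of SL(2,ℝ) (i.e., A = exp(X) for some X in sl(2,ℝ)) if and only if either tr A > -2 or A = -I. -/

import Mathlib

open NormedSpace Matrix Nat

attribute [local instance] Matrix.linftyOpNormedRing Matrix.linftyOpNormedAlgebra

namespace SL2Aux

abbrev M2 := Matrix (Fin 2) (Fin 2) ℝ

/-- Cayley–Hamilton for 2×2 matrices. -/
lemma sq_eq (A : M2) : A ^ 2 = A.trace • A - A.det • (1 : M2) := by
  ext i j
  fin_cases i <;> fin_cases j <;>
    simp [pow_two, Matrix.mul_apply, Fin.sum_univ_succ, Matrix.det_fin_two,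
      Matrix.trace_fin_two, Matrix.one_apply] <;> ring

lemma sub_smul_one_sq (A : M2) (r : ℝ) :
    (A - r • 1) ^ 2 = A ^ 2 - (2 * r) • A + (r ^ 2) • (1 : M2) := by
  ext i j
  fin_cases i <;> fin_cases j <;>
    simp [pow_two, Matrix.mul_apply, Fin.sum_univ_succ, Matrix.one_apply] <;> ring

/-- If `X ^ 2 = c • 1` and `f, g` are the sums of the relevant scalar series,
then `exp ℝ X = f • 1 + g • X`. -/
lemma exp_of_sq (X : M2) (c : ℝ) (h : X ^ 2 = c • (1 : M2)) {f g : ℝ}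
    (hf : HasSum (fun k : ℕ => c ^ k / (2 * k)!) f)
    (hg : HasSum (fun k : ℕ => c ^ k / (2 * k + 1)!) g) :
    exp X = f • (1 : M2) + g • X := by
  rw [exp_eq_tsum (𝕂 := ℝ)]
  refine HasSum.tsum_eq ?_
  have heven : ∀ k : ℕ, ((((2 * k)! : ℝ))⁻¹) • X ^ (2 * k) =
      (c ^ k / (2 * k)!) • (1 : M2) := by
    intro k
    rw [pow_mul, h, smul_pow, one_pow, smul_smul]
    congr 1
    rw [div_eq_inv_mul, mul_comm]
  have hodd : ∀ k : ℕ, ((((2 * k + 1)! : ℝ))⁻¹) • X ^ (2 * k + 1) =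
      (c ^ k / (2 * k + 1)!) • X := by
    intro k
    rw [pow_succ, pow_mul, h, smul_pow, one_pow, smul_mul_assoc, one_mul, smul_smul]
    congr 1
    rw [div_eq_inv_mul, mul_comm]
  refine HasSum.even_add_odd ?_ ?_
  · simpa only [heven] using hf.smul_const (1 : M2)
  · simpa only [hodd] using hg.smul_const X

lemma hasSum_f_neg_sq (θ : ℝ) :
    HasSum (fun k : ℕ => (-θ ^ 2) ^ k / (2 * k)!) (Real.cos θ) := by
  convert Real.hasSum_cos θ using 2 with k
  rw [neg_pow, ← pow_mul]

lemma hasSum_g_neg_sq {θ : ℝ} (hθ : θ ≠ 0) :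
    HasSum (fun k : ℕ => (-θ ^ 2) ^ k / (2 * k + 1)!) (Real.sin θ / θ) := by
  have := (Real.hasSum_sin θ).div_const θ
  convert this using 2 with k
  · rfl
  field_simp
  rw [neg_pow, ← pow_mul]
  ring

lemma hasSum_f_sq (μ : ℝ) :
    HasSum (fun k : ℕ => (μ ^ 2) ^ k / (2 * k)!) (Real.cosh μ) := by
  convert Real.hasSum_cosh μ using 2 with k
  rw [← pow_mul, mul_comm 2 k]

lemma hasSum_g_sq {μ : ℝ} (hμ : μ ≠ 0) :
    HasSum (fun k : ℕ => (μ ^ 2) ^ k / (2 * k + 1)!) (Real.sinh μ / μ) := by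
  have := (Real.hasSum_sinh μ).div_const μ
  convert this using 2 with k
  · rfl
  field_simp
  rw [← pow_mul]
  ring

lemma hasSum_f_zero : HasSum (fun k : ℕ => (0 : ℝ) ^ k / (2 * k)!) 1 := by
  have h : ∀ k : ℕ, k ∉ ({0} : Finset ℕ) → (0 : ℝ) ^ k / (2 * k)! = 0 := by
    intro k hk
    rw [zero_pow (by simpa using hk), zero_div]
  simpa using hasSum_sum_of_ne_finset_zero (s := {0}) h

lemma hasSum_g_zero : HasSum (fun k : ℕ => (0 : ℝ) ^ k / (2 * k + 1)!) 1 := by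
  have h : ∀ k : ℕ, k ∉ ({0} : Finset ℕ) → (0 : ℝ) ^ k / (2 * k + 1)! = 0 := by
    intro k hk
    rw [zero_pow (by simpa using hk), zero_div]
  simpa using hasSum_sum_of_ne_finset_zero (s := {0}) h

lemma trace_form (f g : ℝ) (X : M2) (hX : X.trace = 0) :
    (f • (1 : M2) + g • X).trace = 2 * f := by
  simp [Matrix.trace_add, Matrix.trace_smul, hX, Matrix.trace_one]
  ring

end SL2Aux

open SL2Aux

/-- A matrix `A ∈ SL(2,ℝ)` lies on a one-parameter subgroup of `SL(2,ℝ)`, i.e.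
`A = exp X` for some traceless `X`, iff `tr A > -2` or `A = -1`. -/
theorem sl2_exp_mem_iff (A : Matrix (Fin 2) (Fin 2) ℝ) (hA : A.det = 1) :
    (∃ X : Matrix (Fin 2) (Fin 2) ℝ, X.trace = 0 ∧ NormedSpace.exp X = A) ↔
      (-2 < A.trace ∨ A = -1) := by
  constructor
  · rintro ⟨X, hX0, rfl⟩
    have hXsq : X ^ 2 = (-X.det) • (1 : M2) := by
      rw [sq_eq X, hX0, zero_smul, zero_sub, neg_smul]
    rcases le_or_gt 0 (-X.det) with hc | hc
    · -- c ≥ 0 : hyperbolic/parabolic case, trace ≥ 2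
      left
      rcases eq_or_lt_of_le hc with hc0 | hcpos
      · rw [← hc0] at hXsq
        rw [exp_of_sq X 0 hXsq hasSum_f_zero hasSum_g_zero, trace_form _ _ _ hX0]
        norm_num
      · set μ := Real.sqrt (-X.det) with hμdef
        have hμpos : 0 < μ := Real.sqrt_pos.2 hcpos
        have hμsq : μ ^ 2 = -X.det := Real.sq_sqrt hc
        rw [← hμsq] at hXsq
        rw [exp_of_sq X (μ ^ 2) hXsq (hasSum_f_sq μ) (hasSum_g_sq hμpos.ne'),
          trace_form _ _ _ hX0]
        have : (1 : ℝ) ≤ Real.cosh μ := Real.one_le_cosh μ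
        linarith
    · -- c < 0 : elliptic case
      set θ := Real.sqrt (X.det) with hθdef
      have hdpos : 0 < X.det := by linarith
      have hθpos : 0 < θ := Real.sqrt_pos.2 hdpos
      have hθsq : -θ ^ 2 = -X.det := by rw [Real.sq_sqrt hdpos.le]
      rw [← hθsq] at hXsq
      rw [exp_of_sq X (-θ ^ 2) hXsq (hasSum_f_neg_sq θ) (hasSum_g_neg_sq hθpos.ne')]
      rcases eq_or_lt_of_le (Real.neg_one_le_cos θ) with hcos | hcos
      · right
        have hsin : Real.sin θ = 0 := by
          have h1 := Real.sin_sq_add_cos_sq θ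
          rw [← hcos] at h1
          nlinarith [sq_nonneg (Real.sin θ)]
        rw [← hcos, hsin, zero_div, zero_smul, add_zero, neg_smul, one_smul]
      · left
        rw [trace_form _ _ _ hX0]
        linarith
  · rintro (htr | hA1)
    · -- construct X from A with trace > -2
      set t := A.trace with ht
      have hAsq : A ^ 2 = t • A - (1 : M2) := by
        rw [sq_eq A, hA, one_smul]
      rcases lt_trichotomy t 2 with h2 | h2 | h2
      · -- -2 < t < 2 : elliptic
        set θ := Real.arccos (t / 2) with hθdef
        have ht1 : -1 ≤ t / 2 := by linarith
        have ht2 : t / 2 ≤ 1 := by linarith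
        have hcos : Real.cos θ = t / 2 := Real.cos_arccos ht1 ht2
        have hθpos : 0 < θ := Real.arccos_pos.2 (by linarith)
        have hsinpos : 0 < Real.sin θ := by
          rw [hθdef, Real.sin_arccos]
          apply Real.sqrt_pos.2
          nlinarith
        set B : M2 := A - (t / 2) • 1 with hB
        set X : M2 := (θ / Real.sin θ) • B with hXdef
        have hBsq : B ^ 2 = (t ^ 2 / 4 - 1) • (1 : M2) := by
          rw [hB, sub_smul_one_sq, hAsq]
          module
        have hXsq : X ^ 2 = (-θ ^ 2) • (1 : M2) := by
          rw [hXdef, smul_pow, hBsq, smul_smul]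
          congr 1
          have hsin2 : Real.sin θ ^ 2 = 1 - (t / 2) ^ 2 := by
            have := Real.sin_sq_add_cos_sq θ
            rw [hcos] at this; linarith
          field_simp
          nlinarith [hsin2]
        refine ⟨X, ?_, ?_⟩
        · have hBt : B.trace = 0 := by
            rw [hB, Matrix.trace_sub, Matrix.trace_smul, Matrix.trace_one, ← ht]
            simp only [Fintype.card_fin, Nat.cast_ofNat, smul_eq_mul]
            ring
          rw [hXdef, Matrix.trace_smul, hBt, smul_zero]
        · rw [exp_of_sq X (-θ ^ 2) hXsq (hasSum_f_neg_sq θ) (hasSum_g_neg_sq hθpos.ne'),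
            hXdef, smul_smul,
            show Real.sin θ / θ * (θ / Real.sin θ) = 1 by
              field_simp, one_smul, hcos, hB]
          abel
      · -- t = 2 : parabolic
        refine ⟨A - 1, ?_, ?_⟩
        · rw [Matrix.trace_sub, Matrix.trace_one, ← ht, h2]
          simp
        · have h1 : (A - 1 : M2) = A - (1 : ℝ) • 1 := by rw [one_smul]
          have hsq : (A - 1) ^ 2 = (0 : ℝ) • (1 : M2) := by
            rw [h1, sub_smul_one_sq, hAsq, h2]
            module
          rw [exp_of_sq _ 0 hsq hasSum_f_zero hasSum_g_zero, one_smul, one_smul]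
          abel
      · -- t > 2 : hyperbolic
        have hr : 1 < t / 2 := by linarith
        set s := Real.sqrt ((t / 2) ^ 2 - 1) with hs
        have hspos : 0 < s := Real.sqrt_pos.2 (by nlinarith)
        set μ := Real.arsinh s with hμ
        have hsinh : Real.sinh μ = s := Real.sinh_arsinh s
        have hcosh : Real.cosh μ = t / 2 := by
          rw [hμ, Real.cosh_arsinh, hs, Real.sq_sqrt (by nlinarith : (0:ℝ) ≤ (t/2)^2 - 1),
            show (1 : ℝ) + ((t/2)^2 - 1) = (t/2)^2 by ring]
          exact Real.sqrt_sq (by linarith)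
        have hμpos : 0 < μ := Real.sinh_pos_iff.1 (by rw [hsinh]; exact hspos)
        set B : M2 := A - (t / 2) • 1 with hB
        set X : M2 := (μ / s) • B with hXdef
        have hBsq : B ^ 2 = (t ^ 2 / 4 - 1) • (1 : M2) := by
          rw [hB, sub_smul_one_sq, hAsq]
          module
        have hXsq : X ^ 2 = (μ ^ 2) • (1 : M2) := by
          rw [hXdef, smul_pow, hBsq, smul_smul]
          congr 1
          have hs2 : s ^ 2 = (t / 2) ^ 2 - 1 := Real.sq_sqrt (by nlinarith)
          field_simp
          nlinarith [hs2]
        refine ⟨X, ?_, ?_⟩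
        · have hBt : B.trace = 0 := by
            rw [hB, Matrix.trace_sub, Matrix.trace_smul, Matrix.trace_one, ← ht]
            simp only [Fintype.card_fin, Nat.cast_ofNat, smul_eq_mul]
            ring
          rw [hXdef, Matrix.trace_smul, hBt, smul_zero]
        · rw [exp_of_sq X (μ ^ 2) hXsq (hasSum_f_sq μ) (hasSum_g_sq hμpos.ne'),
            hXdef, smul_smul, hsinh,
            show s / μ * (μ / s) = 1 by
              field_simp, one_smul, hcosh, hB]
          abel
    · -- A = -1 : rotation by π
      refine ⟨!![0, -Real.pi; Real.pi, 0], ?_, ?_⟩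
      · simp [Matrix.trace_fin_two]
      · have hsq : (!![0, -Real.pi; Real.pi, 0] : M2) ^ 2 = (-Real.pi ^ 2) • (1 : M2) := by
          ext i j
          fin_cases i <;> fin_cases j <;>
            simp [pow_two, Matrix.mul_apply, Fin.sum_univ_succ, Matrix.one_apply] <;> ring
        rw [exp_of_sq _ _ hsq (hasSum_f_neg_sq Real.pi)
            (hasSum_g_neg_sq Real.pi_ne_zero), Real.cos_pi, Real.sin_pi, zero_div,
          zero_smul, add_zero, neg_smul, one_smul, hA1]
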